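/- arXiv:1701.03293 — 2 statements merged into one kernel-verified Lean document; each statement's English description precedes it below -/
import Mathlib

section
/- Let a, b ∈ ℂ with a·b ≠ 0 and |a| ≠ |b|, let φ be the 2×2 complex matrix with rows (0, a) and (b, 0), and let φᴴ be its conjugate transpose. If M is a 2×2 complex matrix with Tr(M) = 0 which commutes with both φ and φᴴ, then M = 0. -/
open Matrix

/-- If `φ = !![0,a;b,0]` with `a·b ≠ 0` and `|a| ≠ |b|`, and a traceless 2×2 complex
matrix `M` commutes with both `φ` and `φᴴ`, then `M = 0`. -/
theorem traceless_commuting_with_phi_and_phiH_eq_zero (a b : ℂ)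
    (hab : a * b ≠ 0) (habs : ‖a‖ ≠ ‖b‖)
    (M : Matrix (Fin 2) (Fin 2) ℂ) (htr : trace M = 0)
    (hcomm : M * !![0, a; b, 0] = !![0, a; b, 0] * M)
    (hcommH : M * (!![0, a; b, 0])ᴴ = (!![0, a; b, 0])ᴴ * M) :
    M = 0 := by
  have ha : a ≠ 0 := fun h => hab (by simp [h])
  have hb : b ≠ 0 := fun h => hab (by simp [h])
  have h01 := congrFun (congrFun hcomm 0) 1
  have h10 := congrFun (congrFun hcomm 1) 0
  have h00 := congrFun (congrFun hcomm 0) 0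
  have hH00 := congrFun (congrFun hcommH 0) 0
  simp [Matrix.mul_apply, Fin.sum_univ_two] at h01 h10 h00 hH00
  -- h01 : M 0 0 * a = a * M 1 1 ; h00 : M 0 1 * b = a * M 1 0
  -- hH00 : M 0 1 * conj a = conj b * M 1 0
  have htr' : M 0 0 + M 1 1 = 0 := by
    simpa [Matrix.trace, Fin.sum_univ_two] using htr
  have hdiag : M 0 0 = M 1 1 := by
    have := h01
    field_simp at this
    exact this
  have h00z : M 0 0 = 0 := by
    have : 2 * M 0 0 = 0 := by linear_combination htr' + hdiag
    exact (mul_eq_zero.mp this).resolve_left two_ne_zero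
  have h11z : M 1 1 = 0 := by rw [← hdiag]; exact h00z
  have hne : a * (starRingEnd ℂ) a - b * (starRingEnd ℂ) b ≠ 0 := by
    intro h
    apply habs
    have h1 : (Complex.normSq a : ℂ) = Complex.normSq b := by
      rw [← Complex.mul_conj, ← Complex.mul_conj]; linear_combination h
    have h2 : Complex.normSq a = Complex.normSq b := by exact_mod_cast h1
    have := Complex.sq_norm a
    have := Complex.sq_norm b
    nlinarith [norm_nonneg a, norm_nonneg b]
  have h01z : M 0 1 = 0 := by
    have key : M 0 1 * (a * (starRingEnd ℂ) a - b * (starRingEnd ℂ) b) = 0 := by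
      linear_combination a * hH00 - (starRingEnd ℂ) b * h00
    exact (mul_eq_zero.mp key).resolve_right hne
  have h10z : M 1 0 = 0 := by
    have : a * M 1 0 = 0 := by linear_combination -h00 + b * h01z
    exact (mul_eq_zero.mp this).resolve_left ha
  ext i j
  fin_cases i <;> fin_cases j <;> simp [h00z, h01z, h10z, h11z]
end

section
/- Let a, b ∈ ℂ with a·b ≠ 0 and let φ be the 2×2 complex matrix with rows (0, a) and (b, 0). Then there exists a constant C > 0 such that every 2×2 complex matrix M with Tr(M) = 0 and Tr(M·φᴴ) = 0 satisfies ‖[φ, M]‖ ≥ C·‖M‖, where ‖·‖ is the Frobenius norm and [X,Y] = XY − YX. -/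
open Matrix

/-- For `φ = !![0,a;b,0]` with `a·b ≠ 0` there is `C > 0` such that every traceless
2×2 complex matrix `M` orthogonal to `φ` (i.e. `Tr(M·φᴴ) = 0`) satisfies
`‖[φ,M]‖ ≥ C·‖M‖` in the Frobenius norm `‖X‖ = √(Tr(X Xᴴ))`. -/
theorem bracket_coercive_on_orthogonal_complement (a b : ℂ) (hab : a * b ≠ 0) :
    ∃ C > (0 : ℝ), ∀ M : Matrix (Fin 2) (Fin 2) ℂ,
      trace M = 0 → trace (M * (!![0, a; b, 0])ᴴ) = 0 →
      C * Real.sqrt (trace (M * Mᴴ)).re ≤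
        Real.sqrt (trace ((!![0, a; b, 0] * M - M * !![0, a; b, 0]) *
          (!![0, a; b, 0] * M - M * !![0, a; b, 0])ᴴ)).re := by
  have ha : a ≠ 0 := fun h => hab (by simp [h])
  set k : ℝ := 2 * (Complex.normSq a + Complex.normSq b) with hk
  have hk0 : 0 < k := by
    have h1 : 0 < Complex.normSq a := Complex.normSq_pos.mpr ha
    have h2 : 0 ≤ Complex.normSq b := Complex.normSq_nonneg b
    positivity
  refine ⟨Real.sqrt k, Real.sqrt_pos.mpr hk0, fun M h1 h2 => ?_⟩
  have h1' : M 0 0 + M 1 1 = 0 := by simpa [trace_fin_two] using h1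
  have h2' : M 0 1 * (starRingEnd ℂ) a + M 1 0 * (starRingEnd ℂ) b = 0 := by
    simpa [trace_fin_two, mul_apply, Fin.sum_univ_two, conjTranspose_apply] using h2
  have hkc : (k : ℂ) = 2 * (a * (starRingEnd ℂ) a + b * (starRingEnd ℂ) b) := by
    rw [hk]; push_cast [Complex.mul_conj]; ring
  have key : trace ((!![0, a; b, 0] * M - M * !![0, a; b, 0]) *
      (!![0, a; b, 0] * M - M * !![0, a; b, 0])ᴴ) = (k : ℂ) * trace (M * Mᴴ) := by
    have hM : M = !![M 0 0, M 0 1; M 1 0, M 1 1] := by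
      ext i j; fin_cases i <;> fin_cases j <;> rfl
    rw [hkc, hM]
    simp [trace_fin_two, mul_apply, Matrix.sub_apply, conjTranspose_apply,
      Fin.sum_univ_two, Complex.star_def, Matrix.vecMul, dotProduct]
    linear_combination (-2*a*((starRingEnd ℂ) (M 0 1)) - 2*b*((starRingEnd ℂ) (M 1 0))) * h2'
      + (-(a*(starRingEnd ℂ) a + b*(starRingEnd ℂ) b)
          * ((starRingEnd ℂ) (M 0 0) + (starRingEnd ℂ) (M 1 1))) * h1'
  have hre : (trace ((!![0, a; b, 0] * M - M * !![0, a; b, 0]) *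
      (!![0, a; b, 0] * M - M * !![0, a; b, 0])ᴴ)).re = k * (trace (M * Mᴴ)).re := by
    rw [key, Complex.re_ofReal_mul]
  rw [hre, Real.sqrt_mul hk0.le]
end
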